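/- If X is a heavy-tailed random variable (i.e., E[e^{t|X|}] = ∞ for all t > 0) and Y is an independent symmetric continuous random variable with a density, then the product XY is also heavy-tailed. -/

import Mathlib

open MeasureTheory ProbabilityTheory Real
open scoped ENNReal NNReal

/-- A real random variable `X` on `(Ω, μ)` is heavy-tailed if `E[e^{t|X|}] = ∞` for all `t > 0`. -/
def HeavyTailed {Ω : Type*} [MeasurableSpace Ω] (μ : Measure Ω) (X : Ω → ℝ) : Prop :=
  ∀ t : ℝ, 0 < t → ∫⁻ ω, ENNReal.ofReal (Real.exp (t * |X ω|)) ∂μ = ⊤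

/-- If `X` is heavy-tailed and `Y` is an independent symmetric random variable admitting a
Lebesgue density, then the product `X * Y` is heavy-tailed. -/
theorem heavyTailed_mul_of_indep_symm_density
    {Ω : Type*} [MeasurableSpace Ω] (μ : Measure Ω) [IsProbabilityMeasure μ]
    (X Y : Ω → ℝ) (hX : Measurable X) (hY : Measurable Y)
    (hindep : IndepFun X Y μ)
    (hheavy : HeavyTailed μ X)
    (hsymm : Measure.map Y μ = Measure.map (fun ω => -(Y ω)) μ)
    (f : ℝ → ℝ≥0∞) (hf : Measurable f)
    (hdens : Measure.map Y μ = volume.withDensity f) :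
    HeavyTailed μ (fun ω => X ω * Y ω) := by
  intro t ht
  set ν := Measure.map Y μ with hν
  have hYm : AEMeasurable Y μ := hY.aemeasurable
  haveI : IsProbabilityMeasure ν := Measure.isProbabilityMeasure_map hYm
  have hν0 : ν {0} = 0 := by
    rw [hdens, withDensity_apply _ (measurableSet_singleton 0),
      setLIntegral_measure_zero _ _ (measure_singleton 0)]
  obtain ⟨c, hc, hcpos⟩ : ∃ c : ℝ, 0 < c ∧ 0 < ν {y | c ≤ |y|} := by
    by_contra hcon
    push_neg at hcon
    have hall : ∀ n : ℕ, ν {y : ℝ | (1 : ℝ) / (n + 1) ≤ |y|} = 0 := fun n =>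
      le_antisymm (hcon _ (by positivity)) zero_le
    have hUnion : ν (⋃ n : ℕ, {y : ℝ | (1 : ℝ) / (n + 1) ≤ |y|}) = 0 :=
      measure_iUnion_null hall
    have hcov : ({(0 : ℝ)}ᶜ : Set ℝ) ⊆ ⋃ n : ℕ, {y : ℝ | (1 : ℝ) / (n + 1) ≤ |y|} := by
      intro y hy
      have hy' : 0 < |y| := abs_pos.mpr hy
      obtain ⟨n, hn⟩ := exists_nat_one_div_lt hy'
      exact Set.mem_iUnion.mpr ⟨n, le_of_lt hn⟩
    have hcompl : ν ({(0 : ℝ)}ᶜ) = 0 := measure_mono_null hcov hUnion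
    have h1 : (1 : ℝ≥0∞) ≤ 0 := by
      calc (1 : ℝ≥0∞) = ν Set.univ := (measure_univ).symm
        _ = ν ({(0 : ℝ)} ∪ {(0 : ℝ)}ᶜ) := by rw [Set.union_compl_self]
        _ ≤ ν {(0 : ℝ)} + ν ({(0 : ℝ)}ᶜ) := measure_union_le _ _
        _ = 0 := by rw [hν0, hcompl, add_zero]
    simp at h1
  have hmap : Measure.map (fun ω => (X ω, Y ω)) μ = (Measure.map X μ).prod ν :=
    (indepFun_iff_map_prod_eq_prod_map_map hX.aemeasurable hYm).mp hindep
  have hFm : Measurable (fun p : ℝ × ℝ => ENNReal.ofReal (Real.exp (t * |p.1 * p.2|))) := by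
    fun_prop
  have hinner : ∀ y : ℝ, c ≤ |y| →
      (∫⁻ x, ENNReal.ofReal (Real.exp (t * |x * y|)) ∂(Measure.map X μ)) = ⊤ := by
    intro y hy
    have hXheavy : ∫⁻ ω, ENNReal.ofReal (Real.exp (t * c * |X ω|)) ∂μ = ⊤ :=
      hheavy (t * c) (by positivity)
    have hmapX : (∫⁻ x, ENNReal.ofReal (Real.exp (t * c * |x|)) ∂(Measure.map X μ))
        = ∫⁻ ω, ENNReal.ofReal (Real.exp (t * c * |X ω|)) ∂μ :=
      lintegral_map (by fun_prop) hX
    have hmono : (∫⁻ x, ENNReal.ofReal (Real.exp (t * c * |x|)) ∂(Measure.map X μ))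
        ≤ ∫⁻ x, ENNReal.ofReal (Real.exp (t * |x * y|)) ∂(Measure.map X μ) := by
      refine lintegral_mono fun x => ?_
      refine ENNReal.ofReal_le_ofReal (Real.exp_le_exp.mpr ?_)
      have : c * |x| ≤ |x * y| := by
        rw [abs_mul]
        calc c * |x| ≤ |y| * |x| := by
              apply mul_le_mul_of_nonneg_right hy (abs_nonneg x)
          _ = |x| * |y| := mul_comm _ _
      nlinarith [ht.le]
    rw [hmapX, hXheavy] at hmono
    exact top_le_iff.mp hmono
  have hSmeas : MeasurableSet {y : ℝ | c ≤ |y|} := by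
    have : Measurable fun y : ℝ => |y| := by fun_prop
    exact measurableSet_le measurable_const this
  have key : (∫⁻ ω, ENNReal.ofReal (Real.exp (t * |X ω * Y ω|)) ∂μ) = ⊤ := by
    have h1 : (∫⁻ ω, ENNReal.ofReal (Real.exp (t * |X ω * Y ω|)) ∂μ)
        = ∫⁻ p : ℝ × ℝ, ENNReal.ofReal (Real.exp (t * |p.1 * p.2|))
            ∂((Measure.map X μ).prod ν) := by
      rw [← hmap, lintegral_map hFm (hX.prodMk hY)]
    have h2 : (∫⁻ p : ℝ × ℝ, ENNReal.ofReal (Real.exp (t * |p.1 * p.2|))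
            ∂((Measure.map X μ).prod ν))
        = ∫⁻ y, ∫⁻ x, ENNReal.ofReal (Real.exp (t * |x * y|)) ∂(Measure.map X μ) ∂ν := by
      rw [lintegral_prod_symm _ hFm.aemeasurable]
    rw [h1, h2]
    have h3 : (∫⁻ y in {y : ℝ | c ≤ |y|},
        ∫⁻ x, ENNReal.ofReal (Real.exp (t * |x * y|)) ∂(Measure.map X μ) ∂ν) = ⊤ := by
      have : (∫⁻ y in {y : ℝ | c ≤ |y|},
          ∫⁻ x, ENNReal.ofReal (Real.exp (t * |x * y|)) ∂(Measure.map X μ) ∂ν)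
          = ∫⁻ _ in {y : ℝ | c ≤ |y|}, (⊤ : ℝ≥0∞) ∂ν := by
        refine setLIntegral_congr_fun hSmeas (fun y hy => ?_)
        exact hinner y hy
      rw [this, setLIntegral_const]
      exact ENNReal.top_mul hcpos.ne'
    refine top_le_iff.mp ?_
    rw [← h3]
    exact setLIntegral_le_lintegral _ _
  exact key
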